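/- For all n ≥ 0, a_{n+2} = Σ_{λ ∈ B(n)} Π_{i ≥ 0} C(i+3, m_{2^i}(λ)), where the product over i ≥ 0 is finite since all but finitely many factors equal 1, and C(i+3, m) denotes the binomial coefficient (equal to 0 when m > i+3). -/

import Mathlib

/-- `pre2 s` is the multiset of all pairwise products of two distinct entries
(by position) of the multiset `s`, i.e. the summands of `e₂` evaluated at `s`. -/
def pre2 (s : Multiset ℕ) : Multiset ℕ := (Multiset.powersetCard 2 s).map Multiset.prod

open Classical in
/-- The finset of binary partitions of `n`: partitions all of whose parts are powers of 2. -/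
noncomputable def binaryPartitions (n : ℕ) : Finset (Nat.Partition n) :=
  Finset.univ.filter fun l => ∀ p ∈ l.parts, ∃ i : ℕ, p = 2 ^ i

/-- `a n = m₁(ImB₂(n))`: the total number of parts equal to 1 in the image of `pre2`
on binary partitions of `n` with at least two parts; by injectivity this equals
`∑_{λ ∈ B(n)} C(m₁(λ), 2)`. -/
noncomputable def a (n : ℕ) : ℕ :=
  ∑ l ∈ binaryPartitions n, Nat.choose (l.parts.count 1) 2

open Finset

/-! ### Auxiliary definitions -/

/-- The recursive function both sides equal. -/
def g : ℕ → ℕ → ℕ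
  | _, 0 => 1
  | k, n+1 => ∑ m ∈ (range (n+2)).filter (fun m => m % 2 = (n+1) % 2),
      Nat.choose (k+3) m * g (k+1) ((n+1-m)/2)
  termination_by _ n => n
  decreasing_by omega

/-- doubling a multiset -/
def dbl (s : Multiset ℕ) : Multiset ℕ := s.map (fun x => 2 * x)

/-- halved non-1 parts -/
def hp (s : Multiset ℕ) : Multiset ℕ := (s.filter (fun p => ¬ p = 1)).map (fun x => x / 2)

/-- the all-ones partition, used as junk value -/
def onesP (n : ℕ) : Nat.Partition n :=
  ⟨Multiset.replicate n 1, fun h => by simp [Multiset.eq_of_mem_replicate h], by simp⟩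

/-- two-parameter binomial family -/
def Rf (a b c : ℕ) : ℕ := ∑ T ∈ range (c/2+1), Nat.choose a (c - 2*T) * Nat.choose (T+b) b

/-! ### basic multiset lemmas -/

lemma two_mul_inj : Function.Injective (fun x : ℕ => 2 * x) :=
  mul_right_injective₀ two_ne_zero

lemma dbl_sum (s : Multiset ℕ) : (dbl s).sum = 2 * s.sum := by
  simpa [dbl] using Multiset.sum_map_mul_left (s := s) (a := 2) (f := id)

lemma one_not_mem_dbl (s : Multiset ℕ) : (1 : ℕ) ∉ dbl s := by
  simp only [dbl, Multiset.mem_map]; rintro ⟨x, -, h⟩; omega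

lemma count_one_dbl (s : Multiset ℕ) : (dbl s).count 1 = 0 :=
  Multiset.count_eq_zero.2 (one_not_mem_dbl s)

lemma count_dbl (s : Multiset ℕ) (x : ℕ) : (dbl s).count (2 * x) = s.count x :=
  Multiset.count_map_eq_count' _ s two_mul_inj x

lemma count_one_unh (m : ℕ) (t : Multiset ℕ) :
    (Multiset.replicate m 1 + dbl t).count 1 = m := by
  rw [Multiset.count_add, Multiset.count_replicate_self, count_one_dbl]; omega

lemma count_pow_unh (m : ℕ) (t : Multiset ℕ) (i : ℕ) :
    (Multiset.replicate m 1 + dbl t).count (2 ^ (i+1)) = t.count (2 ^ i) := by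
  have h1 : (1:ℕ) ≠ 2 ^ (i+1) := by
    have := Nat.one_lt_two_pow (n := i+1) (by omega); omega
  rw [Multiset.count_add, Multiset.count_replicate, if_neg h1, pow_succ, mul_comm, count_dbl,
    Nat.zero_add]

/-- decomposition of a binary partition -/
lemma dbl_hp {n : ℕ} (l : Nat.Partition n) (hl : ∀ p ∈ l.parts, ∃ i : ℕ, p = 2 ^ i) :
    dbl (hp l.parts) = l.parts.filter (fun p => ¬ p = 1) := by
  rw [hp, dbl, Multiset.map_map]
  rw [show ((fun x => 2 * x) ∘ fun x => x / 2) = fun p : ℕ => 2 * (p / 2) from rfl]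
  rw [Multiset.map_congr rfl ?_, Multiset.map_id']
  intro p hps
  have hp1 : ¬ p = 1 := (Multiset.mem_filter.1 hps).2
  obtain ⟨i, rfl⟩ := hl p (Multiset.mem_filter.1 hps).1
  match i, hp1 with
  | i+1, _ =>
    have h2 : (2:ℕ) ^ (i+1) = 2 * 2 ^ i := by rw [pow_succ]; ring
    omega

lemma decomp {n : ℕ} (l : Nat.Partition n) (hl : ∀ p ∈ l.parts, ∃ i : ℕ, p = 2 ^ i) :
    l.parts = Multiset.replicate (l.parts.count 1) 1 + dbl (hp l.parts) ∧
      n = l.parts.count 1 + 2 * (hp l.parts).sum := by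
  have h1 : l.parts = Multiset.replicate (l.parts.count 1) 1 + dbl (hp l.parts) := by
    rw [dbl_hp l hl, ← Multiset.filter_eq' l.parts 1]
    exact (Multiset.filter_add_not (fun p => p = 1) l.parts).symm
  refine ⟨h1, ?_⟩
  have h2 := l.parts_sum
  rw [h1] at h2
  rw [Multiset.sum_add, Multiset.sum_replicate, dbl_sum, smul_eq_mul] at h2
  omega


/-! ### the halving bijection -/

lemma mem_bp {n : ℕ} {l : Nat.Partition n} :
    l ∈ binaryPartitions n ↔ ∀ p ∈ l.parts, ∃ i : ℕ, p = 2 ^ i := by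
  simp [binaryPartitions]

def unhalveP (n m : ℕ) (h : m + 2 * ((n - m)/2) = n) (μ : Nat.Partition ((n-m)/2)) :
    Nat.Partition n where
  parts := Multiset.replicate m 1 + dbl μ.parts
  parts_pos := by
    intro i hi
    rcases Multiset.mem_add.1 hi with h' | h'
    · simp [Multiset.eq_of_mem_replicate h']
    · obtain ⟨x, hx, rfl⟩ := Multiset.mem_map.1 h'
      have := μ.parts_pos hx
      simpa using by omega
  parts_sum := by
    rw [Multiset.sum_add, Multiset.sum_replicate, dbl_sum, smul_eq_mul, μ.parts_sum]
    omega

open Classical in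
noncomputable def halveP (n m : ℕ) (l : Nat.Partition n) : Nat.Partition ((n - m)/2) :=
  if h : (hp l.parts).sum = (n-m)/2 ∧ ∀ x ∈ hp l.parts, 0 < x then
    ⟨hp l.parts, fun {_} hx => h.2 _ hx, h.1⟩
  else onesP _

lemma hp_unh (m : ℕ) (t : Multiset ℕ) : hp (Multiset.replicate m 1 + dbl t) = t := by
  rw [hp, Multiset.filter_add]
  have h1 : (Multiset.replicate m 1).filter (fun p : ℕ => ¬ p = 1) = 0 := by
    apply Multiset.filter_eq_nil.2
    intro p hps
    simp [Multiset.eq_of_mem_replicate hps]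
  have h2 : (dbl t).filter (fun p : ℕ => ¬ p = 1) = dbl t := by
    apply Multiset.filter_eq_self.2
    intro p hps
    obtain ⟨x, hx, rfl⟩ := Multiset.mem_map.1 hps
    simpa using by omega
  rw [h1, h2, zero_add, dbl, Multiset.map_map]
  have h3 : ∀ x ∈ t, ((fun x : ℕ => x / 2) ∘ fun x => 2 * x) x = x := by
    intro x _
    simp only [Function.comp_apply]
    omega
  rw [Multiset.map_congr rfl h3, Multiset.map_id']

lemma halveP_parts {n m : ℕ} (l : Nat.Partition n)
    (hbin : ∀ p ∈ l.parts, ∃ i : ℕ, p = 2 ^ i) (hc : l.parts.count 1 = m) :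
    (halveP n m l).parts = hp l.parts := by
  obtain ⟨hd, hs⟩ := decomp l hbin
  rw [halveP, dif_pos]
  constructor
  · omega
  · intro x hx
    obtain ⟨p, hps, rfl⟩ := Multiset.mem_map.1 hx
    have hp1 : ¬ p = 1 := (Multiset.mem_filter.1 hps).2
    obtain ⟨i, rfl⟩ := hbin p (Multiset.mem_filter.1 hps).1
    match i, hp1 with
    | i+1, _ =>
      have h2 : (2:ℕ) ^ (i+1) = 2 * 2 ^ i := by rw [pow_succ]; ring
      have h3 : 0 < 2 ^ i := pow_pos (by norm_num) i
      omega

lemma inner_bij (n m : ℕ) (hm2 : m % 2 = n % 2) (hmn : m ≤ n) (W : Multiset ℕ → ℕ) :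
    ∑ l ∈ (binaryPartitions n).filter (fun l => l.parts.count 1 = m), W l.parts
      = ∑ μ ∈ binaryPartitions ((n - m)/2), W (Multiset.replicate m 1 + dbl μ.parts) := by
  have hnm : m + 2 * ((n - m)/2) = n := by omega
  refine Finset.sum_nbij' (halveP n m) (unhalveP n m hnm) ?_ ?_ ?_ ?_ ?_
  · intro l hl
    obtain ⟨hlb, hc⟩ := Finset.mem_filter.1 hl
    have hbin := mem_bp.1 hlb
    rw [mem_bp, halveP_parts l hbin hc]
    intro x hx
    obtain ⟨p, hps, rfl⟩ := Multiset.mem_map.1 hx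
    have hp1 : ¬ p = 1 := (Multiset.mem_filter.1 hps).2
    obtain ⟨i, rfl⟩ := hbin p (Multiset.mem_filter.1 hps).1
    match i, hp1 with
    | i+1, _ =>
      exact ⟨i, by rw [pow_succ, Nat.mul_div_cancel _ (by norm_num)]⟩
  · intro μ hμ
    have hbin := mem_bp.1 hμ
    rw [Finset.mem_filter]
    constructor
    · rw [mem_bp]
      intro p hps
      rcases Multiset.mem_add.1 hps with h' | h'
      · exact ⟨0, by simp [Multiset.eq_of_mem_replicate h']⟩
      · obtain ⟨x, hx, rfl⟩ := Multiset.mem_map.1 h'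
        obtain ⟨i, rfl⟩ := hbin x hx
        exact ⟨i+1, by rw [pow_succ]; ring⟩
    · exact count_one_unh m μ.parts
  · intro l hl
    obtain ⟨hlb, hc⟩ := Finset.mem_filter.1 hl
    have hbin := mem_bp.1 hlb
    apply Nat.Partition.ext
    show Multiset.replicate m 1 + dbl (halveP n m l).parts = l.parts
    rw [halveP_parts l hbin hc, ← hc]
    exact (decomp l hbin).1.symm
  · intro μ hμ
    apply Nat.Partition.ext
    show (halveP n m (unhalveP n m hnm μ)).parts = μ.parts
    rw [halveP, dif_pos]
    · exact hp_unh m μ.parts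
    · rw [show (unhalveP n m hnm μ).parts = Multiset.replicate m 1 + dbl μ.parts from rfl,
        hp_unh m μ.parts]
      exact ⟨μ.parts_sum, fun x hx => μ.parts_pos hx⟩
  · intro l hl
    obtain ⟨hlb, hc⟩ := Finset.mem_filter.1 hl
    have hbin := mem_bp.1 hlb
    rw [halveP_parts l hbin hc, ← hc]
    exact congrArg W (decomp l hbin).1

lemma halve_main (n : ℕ) (W : Multiset ℕ → ℕ) :
    ∑ l ∈ binaryPartitions n, W l.parts
      = ∑ m ∈ (range (n+1)).filter (fun m => m % 2 = n % 2),
          ∑ μ ∈ binaryPartitions ((n - m)/2),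
            W (Multiset.replicate m 1 + dbl μ.parts) := by
  have hmap : ∀ l ∈ binaryPartitions n,
      l.parts.count 1 ∈ (range (n+1)).filter (fun m => m % 2 = n % 2) := by
    intro l hl
    have hbin := mem_bp.1 hl
    obtain ⟨-, hs⟩ := decomp l hbin
    rw [Finset.mem_filter, Finset.mem_range]
    omega
  rw [← Finset.sum_fiberwise_of_maps_to hmap (fun l => W l.parts)]
  refine Finset.sum_congr rfl ?_
  intro m hm
  rw [Finset.mem_filter, Finset.mem_range] at hm
  exact inner_bij n m hm.2 (by omega) W


/-! ### binomial identities -/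

lemma Rf_i (a b c : ℕ) : Rf (a+1) b (c+1) = Rf a b (c+1) + Rf a b c := by
  have key : ∀ T ∈ range ((c+1)/2+1),
      Nat.choose (a+1) (c+1-2*T) * Nat.choose (T+b) b
        = Nat.choose a (c+1-2*T) * Nat.choose (T+b) b
          + (if 2*T ≤ c then Nat.choose a (c-2*T) * Nat.choose (T+b) b else 0) := by
    intro T hT
    rw [mem_range] at hT
    by_cases h : 2*T ≤ c
    · rw [if_pos h]
      have h1 : c+1-2*T = (c-2*T)+1 := by omega
      rw [h1, Nat.choose_succ_succ, add_mul]
      ring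
    · rw [if_neg h]
      have h1 : c+1-2*T = 0 := by omega
      rw [h1]
      simp
  rw [Rf, Finset.sum_congr rfl key, Finset.sum_add_distrib]
  congr 1
  rw [← Finset.sum_filter]
  have hset : (range ((c+1)/2+1)).filter (fun T => 2*T ≤ c) = range (c/2+1) := by
    ext x
    simp only [Finset.mem_filter, Finset.mem_range]
    omega
  rw [hset, Rf]

lemma Rf_ii (a b c : ℕ) : Rf a (b+1) (c+2) = Rf a (b+1) c + Rf a b (c+2) := by
  have key : ∀ T ∈ range ((c+2)/2+1),
      Nat.choose a (c+2-2*T) * Nat.choose (T+(b+1)) (b+1)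
        = Nat.choose a (c+2-2*T) * Nat.choose (T+b) (b+1)
          + Nat.choose a (c+2-2*T) * Nat.choose (T+b) b := by
    intro T _
    have h0 : T+(b+1) = (T+b)+1 := rfl
    rw [h0, Nat.choose_succ_succ, mul_add]
    ring
  rw [Rf, Finset.sum_congr rfl key, Finset.sum_add_distrib]
  have hr : (c+2)/2+1 = (c/2+1)+1 := by omega
  congr 1
  rw [hr, Finset.sum_range_succ']
  have h0 : Nat.choose a (c+2-2*0) * Nat.choose (0+b) (b+1) = 0 := by
    simp [Nat.choose_eq_zero_of_lt (Nat.lt_succ_self b)]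
  rw [h0, add_zero, Rf]
  refine Finset.sum_congr rfl ?_
  intro T hT
  have h1 : c+2-2*(T+1) = c - 2*T := by omega
  have h2 : T+1+b = T+(b+1) := by omega
  rw [h1, h2]

lemma Rf_one (c : ℕ) : Rf 1 0 c = 1 := by
  rw [Rf, Finset.sum_eq_single (c/2)]
  · have h1 : c - 2*(c/2) = c % 2 := by omega
    rw [h1]
    have h2 : c % 2 = 0 ∨ c % 2 = 1 := by omega
    rcases h2 with h2 | h2 <;> simp [h2]
  · intro x hx hne
    rw [Finset.mem_range] at hx
    have h1 : 1 < c - 2*x := by omega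
    rw [Nat.choose_eq_zero_of_lt h1, zero_mul]
  · intro h
    exact absurd (Finset.mem_range.2 (by omega)) h

lemma Rf_diag : ∀ b c, Rf (b+1) b c = Nat.choose (c+b) b := by
  intro b
  induction b with
  | zero => intro c; rw [Rf_one]; simp
  | succ b IHb =>
    intro c
    induction c using Nat.strong_induction_on with
    | _ c IHc =>
      match c with
      | 0 => simp [Rf]
      | 1 =>
        rw [Rf]
        have h1 : (1:ℕ)/2+1 = 1 := by omega
        rw [h1, Finset.sum_range_one]
        have h2 : 1+(b+1) = (b+1)+1 := by omega
        rw [h2, Nat.choose_succ_self_right]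
        simp [Nat.choose_one_right]
      | (c+2) =>
        rw [Rf_ii, IHc c (by omega), show c+2 = (c+1)+1 from rfl, Rf_i, IHb, IHb]
        have p1 : Nat.choose ((c+1+1+b)+1) (b+1)
            = Nat.choose (c+1+1+b) b + Nat.choose (c+1+1+b) (b+1) := Nat.choose_succ_succ _ _
        have p2 : Nat.choose ((c+1+b)+1) (b+1)
            = Nat.choose (c+1+b) b + Nat.choose (c+1+b) (b+1) := Nat.choose_succ_succ _ _
        have e1 : c+1+1+(b+1) = (c+1+1+b)+1 := by omega
        have e2 : c+1+1+b = (c+1+b)+1 := by omega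
        have e3 : c+(b+1) = c+1+b := by omega
        rw [e3, e1, p1, e2, p2]
        omega

/-- the `I`-side of the crux identity -/
def If (k c : ℕ) : ℕ := ∑ T ∈ range (c/2+1), Nat.choose (c-2*T+(k+2)) (k+2)

lemma If_step (k c : ℕ) : If k (c+2) = If k c + Nat.choose (c+2+(k+2)) (k+2) := by
  rw [If]
  have hr : (c+2)/2+1 = (c/2+1)+1 := by omega
  rw [hr, Finset.sum_range_succ']
  congr 1
  · rw [If]
    refine Finset.sum_congr rfl ?_
    intro T hT
    have h1 : c+2-2*(T+1) = c - 2*T := by omega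
    rw [h1]

lemma crux (k c : ℕ) : If k c = Rf (k+3) (k+3) c := by
  induction c using Nat.strong_induction_on with
  | _ c IHc =>
    match c with
    | 0 => simp [If, Rf]
    | 1 =>
      have h1 : (1:ℕ)/2+1 = 1 := by omega
      rw [If, Rf, h1, Finset.sum_range_one, Finset.sum_range_one]
      have h2 : 1-2*0+(k+2) = (k+2)+1 := by omega
      rw [h2, Nat.choose_succ_self_right]
      simp [Nat.choose_one_right]
    | (c+2) =>
      rw [If_step, IHc c (by omega), Rf_ii]
      have hd := Rf_diag (k+2) (c+2)
      simp only [show k+2+1 = k+3 from rfl] at hd ⊢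
      omega


/-! ### regrouping double sums -/

lemma regroup (n : ℕ) (G : ℕ → ℕ → ℕ) :
    ∑ m ∈ (range (n+1)).filter (fun m => m % 2 = n % 2),
      ∑ T ∈ (range ((n-m)/2+1)).filter (fun T => T % 2 = ((n-m)/2) % 2), G m T
    = ∑ c ∈ (range (n+1)).filter (fun c => c % 4 = n % 4),
        ∑ T ∈ range (c/2+1), G (c-2*T) T := by
  rw [Finset.sum_sigma', Finset.sum_sigma']
  refine Finset.sum_nbij' (fun p => ⟨p.1 + 2*p.2, p.2⟩) (fun q => ⟨q.1 - 2*q.2, q.2⟩)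
    ?_ ?_ ?_ ?_ ?_
  · rintro ⟨m, T⟩ hp
    simp only [Finset.mem_sigma, Finset.mem_filter, Finset.mem_range] at hp ⊢
    omega
  · rintro ⟨c, T⟩ hq
    simp only [Finset.mem_sigma, Finset.mem_filter, Finset.mem_range] at hq ⊢
    omega
  · rintro ⟨m, T⟩ hp
    simp only [Finset.mem_sigma, Finset.mem_filter, Finset.mem_range] at hp
    have e : m + 2*T - 2*T = m := by omega
    simp only [e]
  · rintro ⟨c, T⟩ hq
    simp only [Finset.mem_sigma, Finset.mem_filter, Finset.mem_range] at hq
    have e : c - 2*T + 2*T = c := by omega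
    simp only [e]
  · rintro ⟨m, T⟩ hp
    simp only [Finset.mem_sigma, Finset.mem_filter, Finset.mem_range] at hp
    have e : m + 2*T - 2*T = m := by omega
    rw [e]

lemma key_swap (k n : ℕ) (h : ℕ → ℕ) :
    ∑ m ∈ (range (n+1)).filter (fun m => m % 2 = n % 2),
      ∑ T ∈ (range ((n-m)/2+1)).filter (fun T => T % 2 = ((n-m)/2) % 2),
        Nat.choose (m+(k+2)) (k+2) * h (((n-m)/2 - T)/2)
    = ∑ m ∈ (range (n+1)).filter (fun m => m % 2 = n % 2),
      ∑ T ∈ (range ((n-m)/2+1)).filter (fun T => T % 2 = ((n-m)/2) % 2),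
        Nat.choose (k+3) m * (Nat.choose (T+(k+3)) (k+3) * h (((n-m)/2 - T)/2)) := by
  rw [regroup n (fun m T => Nat.choose (m+(k+2)) (k+2) * h (((n-m)/2 - T)/2)),
      regroup n (fun m T => Nat.choose (k+3) m * (Nat.choose (T+(k+3)) (k+3)
        * h (((n-m)/2 - T)/2)))]
  refine Finset.sum_congr rfl ?_
  intro c hc
  rw [Finset.mem_filter, Finset.mem_range] at hc
  have harg : ∀ T ∈ range (c/2+1), ((n-(c-2*T))/2 - T)/2 = (n-c)/4 := by
    intro T hT
    rw [Finset.mem_range] at hT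
    omega
  calc ∑ T ∈ range (c/2+1), Nat.choose (c-2*T+(k+2)) (k+2) * h (((n-(c-2*T))/2 - T)/2)
      = ∑ T ∈ range (c/2+1), Nat.choose (c-2*T+(k+2)) (k+2) * h ((n-c)/4) := by
        refine Finset.sum_congr rfl fun T hT => ?_
        rw [harg T hT]
    _ = If k c * h ((n-c)/4) := by rw [If, Finset.sum_mul]
    _ = Rf (k+3) (k+3) c * h ((n-c)/4) := by rw [crux]
    _ = ∑ T ∈ range (c/2+1), (Nat.choose (k+3) (c-2*T) * Nat.choose (T+(k+3)) (k+3))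
          * h ((n-c)/4) := by rw [Rf, Finset.sum_mul]
    _ = ∑ T ∈ range (c/2+1), Nat.choose (k+3) (c-2*T) * (Nat.choose (T+(k+3)) (k+3)
          * h (((n-(c-2*T))/2 - T)/2)) := by
        refine Finset.sum_congr rfl fun T hT => ?_
        rw [harg T hT, mul_assoc]


/-! ### finprod lemmas -/

lemma count_pow_eventually_zero (t : Multiset ℕ) :
    ∀ i, t.sum + 1 ≤ i → t.count (2^i) = 0 := by
  intro i hi
  rw [Multiset.count_eq_zero]
  intro hmem
  have h1 : 2^i ≤ t.sum := Multiset.single_le_sum (fun x _ => Nat.zero_le x) _ hmem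
  have h2 : i < 2^i := Nat.lt_two_pow_self
  omega

lemma finprod_peel (f : ℕ → ℕ) (N : ℕ) (hf : ∀ i, N ≤ i → f i = 1) :
    ∏ᶠ i, f i = f 0 * ∏ᶠ i, f (i+1) := by
  have h1 : ∏ᶠ i, f i = ∏ i ∈ range (N+1), f i := by
    apply finprod_eq_prod_of_mulSupport_subset
    intro x hx
    simp only [Function.mem_mulSupport] at hx
    simp only [Finset.coe_range, Set.mem_Iio]
    by_contra hc
    exact hx (hf x (by omega))
  have h2 : ∏ᶠ i, f (i+1) = ∏ i ∈ range N, f (i+1) := by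
    apply finprod_eq_prod_of_mulSupport_subset
    intro x hx
    simp only [Function.mem_mulSupport] at hx
    simp only [Finset.coe_range, Set.mem_Iio]
    by_contra hc
    exact hx (hf (x+1) (by omega))
  rw [h1, h2, Finset.prod_range_succ']
  ring

lemma key_prod (k m : ℕ) (t : Multiset ℕ) :
    ∏ᶠ i : ℕ, Nat.choose (i+(k+3)) ((Multiset.replicate m 1 + dbl t).count (2^i))
      = Nat.choose (k+3) m * ∏ᶠ i : ℕ, Nat.choose (i+(k+4)) (t.count (2^i)) := by
  have hN : ∀ i, (Multiset.replicate m 1 + dbl t).sum + 1 ≤ i →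
      Nat.choose (i+(k+3)) ((Multiset.replicate m 1 + dbl t).count (2^i)) = 1 := by
    intro i hi
    rw [count_pow_eventually_zero _ i hi, Nat.choose_zero_right]
  rw [finprod_peel _ _ hN]
  congr 1
  · rw [pow_zero, count_one_unh, zero_add]
  · apply finprod_congr
    intro i
    rw [count_pow_unh]
    congr 1
    omega

/-! ### the empty partition -/

def emptyP : Nat.Partition 0 := ⟨0, fun h => absurd h (Multiset.notMem_zero _), rfl⟩

lemma bp_zero : binaryPartitions 0 = {emptyP} := by
  apply Finset.eq_singleton_iff_unique_mem.2
  constructor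
  · rw [mem_bp]
    intro p hps
    exact absurd hps (Multiset.notMem_zero _)
  · intro l _
    apply Nat.Partition.ext
    show l.parts = 0
    have h0 := l.parts_sum
    rw [Multiset.eq_zero_iff_forall_notMem]
    intro x hx
    have h1 := l.parts_pos hx
    have h2 : x ≤ l.parts.sum := Multiset.single_le_sum (fun y _ => Nat.zero_le y) _ hx
    omega

/-! ### lemma A -/

lemma g_succ (k n : ℕ) : g k (n+1) = ∑ m ∈ (range (n+2)).filter (fun m => m % 2 = (n+1) % 2),
    Nat.choose (k+3) m * g (k+1) ((n+1-m)/2) := by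
  rw [g]

lemma lemA : ∀ n k : ℕ, ∑ l ∈ binaryPartitions n,
    (∏ᶠ i : ℕ, Nat.choose (i+(k+3)) (l.parts.count (2^i))) = g k n := by
  intro n
  induction n using Nat.strong_induction_on with
  | _ n IH =>
    match n with
    | 0 =>
      intro k
      rw [bp_zero, Finset.sum_singleton]
      simp [g, emptyP]
    | (n+1) =>
      intro k
      rw [halve_main (n+1) (fun s => ∏ᶠ i : ℕ, Nat.choose (i+(k+3)) (s.count (2^i))),
        g_succ]
      refine Finset.sum_congr rfl ?_
      intro m hm
      rw [Finset.sum_congr rfl fun μ _ => key_prod k m μ.parts, ← Finset.mul_sum]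
      congr 1
      exact IH ((n+1-m)/2) (by omega) (k+1)


/-! ### lemma B -/

lemma bcard_expand (s : ℕ) : ∑ μ ∈ binaryPartitions s, (1:ℕ)
    = ∑ T ∈ (range (s+1)).filter (fun T => T % 2 = s % 2),
        ∑ ρ ∈ binaryPartitions ((s-T)/2), (1:ℕ) :=
  halve_main s (fun _ => 1)

lemma lemB : ∀ n k : ℕ,
    ∑ l ∈ binaryPartitions n, Nat.choose (l.parts.count 1 + (k+2)) (k+2) = g k n := by
  intro n
  induction n using Nat.strong_induction_on with
  | _ n IH =>
    match n with
    | 0 =>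
      intro k
      rw [bp_zero, Finset.sum_singleton]
      simp [g, emptyP]
    | (n+1) =>
      intro k
      rw [halve_main (n+1) (fun s => Nat.choose (s.count 1 + (k+2)) (k+2)), g_succ]
      have step1 : ∀ m ∈ (range (n+2)).filter (fun m => m % 2 = (n+1) % 2),
          (∑ μ ∈ binaryPartitions ((n+1-m)/2),
            Nat.choose ((Multiset.replicate m 1 + dbl μ.parts).count 1 + (k+2)) (k+2))
          = ∑ T ∈ (range ((n+1-m)/2+1)).filter (fun T => T % 2 = ((n+1-m)/2) % 2),
              Nat.choose (m+(k+2)) (k+2)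
                * ∑ ρ ∈ binaryPartitions (((n+1-m)/2-T)/2), (1:ℕ) := by
        intro m _
        have e1 : ∀ μ ∈ binaryPartitions ((n+1-m)/2),
            Nat.choose ((Multiset.replicate m 1 + dbl μ.parts).count 1 + (k+2)) (k+2)
              = Nat.choose (m+(k+2)) (k+2) * 1 := by
          intro μ _
          rw [count_one_unh, mul_one]
        rw [Finset.sum_congr rfl e1, ← Finset.mul_sum, bcard_expand, Finset.mul_sum]
      rw [Finset.sum_congr rfl step1,
        key_swap k (n+1) (fun w => ∑ ρ ∈ binaryPartitions w, (1:ℕ))]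
      refine Finset.sum_congr rfl ?_
      intro m hm
      rw [← Finset.mul_sum]
      congr 1
      have hm' : ∑ μ ∈ binaryPartitions ((n+1-m)/2),
          Nat.choose (μ.parts.count 1 + (k+3)) (k+3) = g (k+1) ((n+1-m)/2) :=
        IH ((n+1-m)/2) (by omega) (k+1)
      rw [← hm', halve_main ((n+1-m)/2) (fun s => Nat.choose (s.count 1 + (k+3)) (k+3))]
      refine Finset.sum_congr rfl ?_
      intro T hT
      rw [Finset.mul_sum]
      refine Finset.sum_congr rfl ?_
      intro ρ _
      rw [count_one_unh, mul_one]


/-! ### adding two ones -/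

def addTwoP (n : ℕ) (l : Nat.Partition n) : Nat.Partition (n+2) where
  parts := l.parts + Multiset.replicate 2 1
  parts_pos := by
    intro i hi
    rcases Multiset.mem_add.1 hi with h' | h'
    · exact l.parts_pos h'
    · simp [Multiset.eq_of_mem_replicate h']
  parts_sum := by
    rw [Multiset.sum_add, Multiset.sum_replicate, l.parts_sum, smul_eq_mul]

open Classical in
noncomputable def subTwoP (n : ℕ) (l : Nat.Partition (n+2)) : Nat.Partition n :=
  if h : (l.parts - Multiset.replicate 2 1).sum = n
      ∧ ∀ x ∈ l.parts - Multiset.replicate 2 1, 0 < x then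
    ⟨l.parts - Multiset.replicate 2 1, fun {_} hx => h.2 _ hx, h.1⟩
  else onesP n

lemma repl_le {n : ℕ} (l : Nat.Partition (n+2)) (hc : 2 ≤ l.parts.count 1) :
    Multiset.replicate 2 1 ≤ l.parts := by
  rw [Multiset.le_iff_count]
  intro x
  rw [Multiset.count_replicate]
  split
  · next h => rw [← h]; exact hc
  · exact Nat.zero_le _

lemma subTwoP_parts {n : ℕ} (l : Nat.Partition (n+2)) (hc : 2 ≤ l.parts.count 1) :
    (subTwoP n l).parts = l.parts - Multiset.replicate 2 1 := by
  have hle := repl_le l hc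
  have hsum : (l.parts - Multiset.replicate 2 1).sum = n := by
    have h1 := tsub_add_cancel_of_le hle
    have h2 := congrArg Multiset.sum h1
    rw [Multiset.sum_add, Multiset.sum_replicate, smul_eq_mul, l.parts_sum] at h2
    omega
  rw [subTwoP, dif_pos]
  exact ⟨hsum, fun x hx => l.parts_pos (Multiset.mem_of_le (tsub_le_self) hx)⟩

lemma a_eq (n : ℕ) : a (n+2) = ∑ l ∈ binaryPartitions n,
    Nat.choose (l.parts.count 1 + 2) 2 := by
  rw [a]
  have h0 : ∀ l ∈ binaryPartitions (n+2),
      Nat.choose (l.parts.count 1) 2 ≠ 0 → 2 ≤ l.parts.count 1 := by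
    intro l _ hne
    by_contra hlt
    exact hne (Nat.choose_eq_zero_of_lt (by omega))
  rw [← Finset.sum_filter_of_ne h0]
  refine Finset.sum_nbij' (subTwoP n) (addTwoP n) ?_ ?_ ?_ ?_ ?_
  · intro l hl
    obtain ⟨hlb, hc⟩ := Finset.mem_filter.1 hl
    rw [mem_bp, subTwoP_parts l hc]
    intro p hps
    exact mem_bp.1 hlb p (Multiset.mem_of_le (tsub_le_self) hps)
  · intro μ hμ
    rw [Finset.mem_filter]
    constructor
    · rw [mem_bp]
      intro p hps
      rcases Multiset.mem_add.1 hps with h' | h'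
      · exact mem_bp.1 hμ p h'
      · exact ⟨0, by simp [Multiset.eq_of_mem_replicate h']⟩
    · show 2 ≤ (μ.parts + Multiset.replicate 2 1).count 1
      rw [Multiset.count_add, Multiset.count_replicate_self]
      omega
  · intro l hl
    obtain ⟨hlb, hc⟩ := Finset.mem_filter.1 hl
    apply Nat.Partition.ext
    show (subTwoP n l).parts + Multiset.replicate 2 1 = l.parts
    rw [subTwoP_parts l hc]
    exact tsub_add_cancel_of_le (repl_le l hc)
  · intro μ hμ
    apply Nat.Partition.ext
    show (subTwoP n (addTwoP n μ)).parts = μ.parts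
    have hc : 2 ≤ (addTwoP n μ).parts.count 1 := by
      show 2 ≤ (μ.parts + Multiset.replicate 2 1).count 1
      rw [Multiset.count_add, Multiset.count_replicate_self]
      omega
    rw [subTwoP_parts _ hc]
    show μ.parts + Multiset.replicate 2 1 - Multiset.replicate 2 1 = μ.parts
    exact add_tsub_cancel_right _ _
  · intro l hl
    obtain ⟨hlb, hc⟩ := Finset.mem_filter.1 hl
    rw [subTwoP_parts l hc, Multiset.count_sub, Multiset.count_replicate_self]
    congr 1
    omega

theorem stmt_19 (n : ℕ) :
    a (n + 2) = ∑ l ∈ binaryPartitions n,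
      ∏ᶠ i : ℕ, Nat.choose (i + 3) (l.parts.count (2 ^ i)) := by
  have hB : ∑ l ∈ binaryPartitions n, Nat.choose (l.parts.count 1 + 2) 2 = g 0 n := lemB n 0
  have hA : ∑ l ∈ binaryPartitions n,
      (∏ᶠ i : ℕ, Nat.choose (i + 3) (l.parts.count (2 ^ i))) = g 0 n := lemA n 0
  rw [a_eq, hB, ← hA]
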